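/- arXiv:1110.6869 — 2 statements merged into one kernel-verified Lean document; each statement's English description precedes it below -/
import Mathlib

section
/- Every admissible function u on (0,π) satisfying ℓ_ε[u] = 0 almost everywhere is of the form u = αψ + β for some constants α, β ∈ ℂ, where ψ = f/p. -/
open MeasureTheory Set Real Filter Topology Asymptotics intervalIntegral

noncomputable section

/-- The punctured double interval `(-π,0) ∪ (0,π)`. -/
def Ipm : Set ℝ := Ioo (-π) 0 ∪ Ioo 0 π

/-- `u` is locally absolutely continuous on `s`: on every compact subinterval of `s`,
`u` is the indefinite integral of a (locally) integrable function. -/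
def ACLocOn {E : Type*} [NormedAddCommGroup E] [NormedSpace ℝ E] [CompleteSpace E]
    (u : ℝ → E) (s : Set ℝ) : Prop :=
  ∀ a b : ℝ, a < b → Icc a b ⊆ s →
    ∃ g : ℝ → E, IntervalIntegrable g volume a b ∧
      ∀ x ∈ Icc a b, u x = u a + ∫ t in a..x, g t

/-- Standing hypotheses (1)-(4) on the coefficient `f`, together with `0 < ε < 2/c`,
where `c = f'(0)` and `f(x) = c·x + O(|x|^(1+δ))` near `0`. -/
structure StandingHyp (ε c δ : ℝ) (f : ℝ → ℝ) : Prop where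
  per : ∀ x, f (x + 2 * π) = f x
  ac : ACLocOn f univ
  diff : ∃ S : Finset ℝ, (∀ x, x ∉ S → DifferentiableAt ℝ f x) ∧ ∀ n : ℤ, (n : ℝ) * π ∉ S
  deriv0 : HasDerivAt f c 0
  cne : c ≠ 0
  δpos : 0 < δ
  near0 : (fun x => f x - c * x) =O[𝓝 (0 : ℝ)] fun x => |x| ^ (1 + δ)
  anti : ∀ x, f (x + π) = -f x
  odd : ∀ x, f (-x) = -f x
  pos : ∀ x ∈ Ioo 0 π, 0 < f x
  εpos : 0 < ε
  εlt : ε < 2 / c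

/-- `p` is an integrating factor: nonvanishing and locally absolutely continuous on
`(-π,0) ∪ (0,π)` with `p'/p = f'/f + 1/(ε f)` a.e. there. -/
structure IsIntegratingFactor (ε : ℝ) (f p : ℝ → ℝ) : Prop where
  ne : ∀ x ∈ Ipm, p x ≠ 0
  ac : ACLocOn p Ipm
  ode : ∀ᵐ x ∂(volume : Measure ℝ), x ∈ Ipm →
    HasDerivAt p (p x * (deriv f x / f x + 1 / (ε * f x))) x

/-- `u` is admissible on `s`, with a.e. derivative `u'`: both `u` and `f·u' + u` are
locally absolutely continuous on `s`. -/
structure AdmissibleOn (f : ℝ → ℝ) (u u' : ℝ → ℂ) (s : Set ℝ) : Prop where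
  ac : ACLocOn u s
  hu' : ∀ᵐ x ∂(volume : Measure ℝ), x ∈ s → HasDerivAt u (u' x) x
  acf : ACLocOn (fun x => (f x : ℂ) * u' x + u x) s

/-- `ℓ_ε[u] = ε (f u')' + u' = F` holds a.e. on `s` (`u'` being the derivative of `u`). -/
def EllEq (ε : ℝ) (f : ℝ → ℝ) (u u' F : ℝ → ℂ) (s : Set ℝ) : Prop :=
  ∃ w' : ℝ → ℂ,
    (∀ᵐ x ∂(volume : Measure ℝ), x ∈ s → HasDerivAt (fun y => (f y : ℂ) * u' y) (w' x) x) ∧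
    (∀ᵐ x ∂(volume : Measure ℝ), x ∈ s → (ε : ℂ) * w' x + u' x = F x)

/-- Lebesgue measure on `(-π,π)`. -/
def μπ : Measure ℝ := volume.restrict (Ioo (-π) π)

instance : IsFiniteMeasure μπ := by
  constructor
  rw [μπ, Measure.restrict_apply_univ, Real.volume_Ioo]
  exact ENNReal.ofReal_lt_top

/-- `u ∈ Dom(L_ε)` and `L_ε u = F`: `u, F ∈ L²(-π,π)`, `u` is admissible with
`ℓ_ε[u] = F` a.e., `u` is absolutely continuous on all of `(-π,π)`, and
`lim_{x→π⁻} u(x) = lim_{x→-π⁺} u(x)`. -/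
structure InDomWith (ε : ℝ) (f : ℝ → ℝ) (u F : ℝ → ℂ) : Prop where
  uL2 : MemLp u 2 μπ
  FL2 : MemLp F 2 μπ
  sol : ∃ u', AdmissibleOn f u u' Ipm ∧ EllEq ε f u u' F Ipm
  acu : ACLocOn u (Ioo (-π) π)
  bc : ∃ L : ℂ, Tendsto u (𝓝[<] π) (𝓝 L) ∧ Tendsto u (𝓝[>] (-π)) (𝓝 L)

/-- The function `ψ = f/p`, as a complex-valued function. -/
def psiC (f p : ℝ → ℝ) : ℝ → ℂ := fun x => ((f x / p x : ℝ) : ℂ)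

/-- The Green's kernel `G(x,y)`. -/
def greenK (ψ : ℝ → ℝ) (x y : ℝ) : ℝ :=
  if 0 < y ∧ y < x ∧ x < π then 1 - ψ x / ψ y
  else if -π < x ∧ x < y ∧ y < 0 then -(1 - ψ x / ψ y)
  else 0

/-- The `n`-th approximation number of a bounded operator: the distance from `S` to the
operators of rank `< n` (for `n ≥ 1` these are the singular values of `S`). -/
noncomputable def approxNum {E F : Type*} [NormedAddCommGroup E] [NormedSpace ℂ E]
    [NormedAddCommGroup F] [NormedSpace ℂ F] (S : E →L[ℂ] F) (n : ℕ) : ℝ :=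
  sInf {r | ∃ A : E →L[ℂ] F,
    Module.rank ℂ (LinearMap.range (A : E →ₗ[ℂ] F)) < (n : Cardinal) ∧ r = ‖S - A‖}

/-- Membership in the Schatten class `C_q`: the singular values `s_n(S)`, `n ≥ 1`,
are `q`-summable. -/
def MemSchatten {E F : Type*} [NormedAddCommGroup E] [NormedSpace ℂ E]
    [NormedAddCommGroup F] [NormedSpace ℂ F] (q : ℝ) (S : E →L[ℂ] F) : Prop :=
  Summable fun n : ℕ => approxNum S (n + 1) ^ q

section Machinery

variable {E : Type*} [NormedAddCommGroup E] [NormedSpace ℝ E] [CompleteSpace E]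

theorem my_ae_ne (m : ℝ) : ∀ᵐ t ∂(volume : Measure ℝ), t ≠ m := by
  rw [ae_iff]
  simp only [not_not, setOf_eq_eq_singleton]
  exact measure_singleton m

theorem my_ae_hasDerivAt_primitive (g : ℝ → E) (hg : Integrable g (volume : Measure ℝ)) (a : ℝ) :
    ∀ᵐ x ∂(volume : Measure ℝ), HasDerivAt (fun y => ∫ t in a..y, g t) (g x) x := by
  filter_upwards [(IsUnifLocDoublingMeasure.vitaliFamily (volume : Measure ℝ) 1).ae_tendsto_average_norm_sub
    hg.locallyIntegrable] with x hx
  have hR : Tendsto (fun y => ⨍ t in Icc x y, ‖g t - g x‖) (𝓝[>] x) (𝓝 0) :=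
    hx.comp (Real.tendsto_Icc_vitaliFamily_right x)
  have hL : Tendsto (fun y => ⨍ t in Icc y x, ‖g t - g x‖) (𝓝[<] x) (𝓝 0) :=
    hx.comp (Real.tendsto_Icc_vitaliFamily_left x)
  rw [hasDerivAt_iff_tendsto_slope]
  have hII : ∀ c d : ℝ, IntervalIntegrable g volume c d := fun c d => hg.intervalIntegrable
  have key : ∀ y : ℝ, y ≠ x →
      ‖slope (fun y => ∫ t in a..y, g t) x y - g x‖ ≤ ⨍ t in uIcc x y, ‖g t - g x‖ := by
    intro y hy
    have h1 : slope (fun y => ∫ t in a..y, g t) x y - g x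
        = (y - x)⁻¹ • (∫ t in x..y, (g t - g x)) := by
      rw [slope_def_module, integral_interval_sub_left (hII a y) (hII a x)]
      rw [intervalIntegral.integral_sub (hII x y) intervalIntegrable_const]
      rw [intervalIntegral.integral_const, smul_sub, smul_smul,
        inv_mul_cancel₀ (sub_ne_zero.2 hy), one_smul]
    have h2 : ‖∫ t in x..y, (g t - g x)‖ ≤ ∫ t in uIcc x y, ‖g t - g x‖ := by
      refine (intervalIntegral.norm_integral_le_integral_norm_uIoc).trans ?_
      apply setIntegral_mono_set
      · exact ((hg.integrableOn.sub (integrableOn_const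
          (isCompact_uIcc.measure_lt_top.ne))).norm)
      · exact Eventually.of_forall fun t => norm_nonneg _
      · exact Eventually.of_forall Ioc_subset_Icc_self
    have hvol : (volume (uIcc x y)).toReal = |y - x| := by
      rcases le_total x y with h | h
      · rw [uIcc_of_le h, Real.volume_Icc, ENNReal.toReal_ofReal (by linarith),
          abs_of_nonneg (by linarith)]
      · rw [uIcc_of_ge h, Real.volume_Icc, ENNReal.toReal_ofReal (by linarith),
          abs_of_nonpos (by linarith)]
        ring
    have h3 : ⨍ t in uIcc x y, ‖g t - g x‖
        = |y - x|⁻¹ * ∫ t in uIcc x y, ‖g t - g x‖ := by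
      rw [setAverage_eq, smul_eq_mul, measureReal_def, hvol]
    rw [h1, norm_smul, norm_inv, Real.norm_eq_abs, h3]
    exact mul_le_mul_of_nonneg_left h2 (inv_nonneg.2 (abs_nonneg _))
  rw [show (𝓝[≠] x) = 𝓝[<] x ⊔ 𝓝[>] x by rw [← nhdsWithin_union, Iio_union_Ioi]]
  rw [Filter.tendsto_sup]
  constructor
  · rw [← tendsto_sub_nhds_zero_iff]
    apply squeeze_zero_norm' _ hL
    filter_upwards [self_mem_nhdsWithin] with y (hy : y < x)
    have := key y hy.ne
    rwa [uIcc_of_ge hy.le] at this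
  · rw [← tendsto_sub_nhds_zero_iff]
    apply squeeze_zero_norm' _ hR
    filter_upwards [self_mem_nhdsWithin] with y (hy : x < y)
    have := key y hy.ne'
    rwa [uIcc_of_le hy.le] at this

theorem my_ae_eq_deriv_of_rep {F g h : ℝ → E} {a b : ℝ} (hab : a < b)
    (hg : IntervalIntegrable g volume a b)
    (hrep : ∀ x ∈ Icc a b, F x = F a + ∫ t in a..x, g t)
    (hF : ∀ᵐ x ∂(volume : Measure ℝ), x ∈ Ioo a b → HasDerivAt F (h x) x) :
    ∀ᵐ x ∂(volume : Measure ℝ), x ∈ Ioo a b → h x = g x := by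
  set g0 : ℝ → E := (Ioc a b).indicator g with hg0
  have hg0int : Integrable g0 volume := by
    rw [hg0, integrable_indicator_iff measurableSet_Ioc]
    exact hg.1
  filter_upwards [my_ae_hasDerivAt_primitive g0 hg0int a, hF] with x hx hFx hmem
  have hcong : ∀ y ∈ Ioo a b, F y = F a + ∫ t in a..y, g0 t := by
    intro y hy
    rw [hrep y (Ioo_subset_Icc_self hy)]
    congr 1
    rw [intervalIntegral.integral_of_le hy.1.le, intervalIntegral.integral_of_le hy.1.le]
    refine setIntegral_congr_fun measurableSet_Ioc fun t ht => ?_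
    rw [hg0, indicator_of_mem (Ioc_subset_Ioc_right hy.2.le ht)]
  have hFx' : HasDerivAt F (g0 x) x := by
    refine (hx.const_add (F a)).congr_of_eventuallyEq ?_
    filter_upwards [Ioo_mem_nhds hmem.1 hmem.2] with y hy using hcong y hy
  rw [(hFx hmem).unique hFx', hg0, indicator_of_mem (Ioo_subset_Ioc_self hmem)]

theorem my_cont_of_rep {F g : ℝ → E} {a b : ℝ} (hab : a ≤ b)
    (hg : IntervalIntegrable g volume a b)
    (hrep : ∀ x ∈ Icc a b, F x = F a + ∫ t in a..x, g t) :
    ContinuousOn F (Icc a b) := by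
  have := intervalIntegral.continuousOn_primitive_interval' hg left_mem_uIcc
  rw [uIcc_of_le hab] at this
  exact (continuousOn_const.add this).congr hrep

end Machinery

theorem my_primitive_mul (g₁ g₂ : ℝ → ℂ) {a b x : ℝ} (hab : a ≤ b)
    (h₁ : IntervalIntegrable g₁ volume a b) (h₂ : IntervalIntegrable g₂ volume a b)
    (hx : x ∈ Icc a b) :
    (∫ t in a..x, g₁ t) * (∫ t in a..x, g₂ t)
      = ∫ t in a..x, (g₁ t * (∫ s in a..t, g₂ s) + (∫ s in a..t, g₁ s) * g₂ t) := by
  have hsub : uIcc a x ⊆ uIcc a b := by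
    rw [uIcc_of_le hab, uIcc_of_le hx.1]
    exact Icc_subset_Icc_right hx.2
  have h₁x : IntegrableOn g₁ (Ioc a x) volume := (h₁.mono_set hsub).1
  have h₂x : IntegrableOn g₂ (Ioc a x) volume := (h₂.mono_set hsub).1
  set μI : Measure ℝ := volume.restrict (Ioc a x) with hμI
  set Φ : ℝ × ℝ → ℂ := fun q => g₁ q.1 * g₂ q.2 with hΦdef
  have hΦ : Integrable Φ (μI.prod μI) := h₁x.mul_prod h₂x
  have hA : MeasurableSet {q : ℝ × ℝ | q.1 < q.2} :=
    measurableSet_lt measurable_fst measurable_snd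
  set A : Set (ℝ × ℝ) := {q : ℝ × ℝ | q.1 < q.2} with hAdef
  -- total integral
  have step1 : ∫ q, Φ q ∂(μI.prod μI) = (∫ t in a..x, g₁ t) * (∫ t in a..x, g₂ t) := by
    rw [MeasureTheory.integral_prod _ hΦ]
    have : ∀ s : ℝ, (∫ t, Φ (s, t) ∂μI) = g₁ s * ∫ t in a..x, g₂ t := by
      intro s
      rw [intervalIntegral.integral_of_le hx.1]
      exact MeasureTheory.integral_const_mul (g₁ s) g₂
    simp_rw [this]
    rw [MeasureTheory.integral_mul_const, intervalIntegral.integral_of_le hx.1,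
      intervalIntegral.integral_of_le hx.1]
  -- complement part
  have step2 : ∫ q, Aᶜ.indicator Φ q ∂(μI.prod μI)
      = ∫ s, g₁ s * (∫ t in a..s, g₂ t) ∂μI := by
    rw [MeasureTheory.integral_prod _ (hΦ.indicator hA.compl)]
    refine integral_congr_ae ?_
    filter_upwards [ae_restrict_mem measurableSet_Ioc] with s hs
    have hind : (fun t => Aᶜ.indicator Φ (s, t)) = (Iic s).indicator (fun t => g₁ s * g₂ t) := by
      have hmem : ∀ t : ℝ, ((s, t) ∈ Aᶜ ↔ t ∈ Iic s) := by
        intro t; simp [hAdef, not_lt]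
      funext t
      by_cases h : t ∈ Iic s
      · rw [Set.indicator_of_mem ((hmem t).2 h), Set.indicator_of_mem h]
      · rw [Set.indicator_of_notMem (fun hc => h ((hmem t).1 hc)), Set.indicator_of_notMem h]
    rw [hind, MeasureTheory.integral_indicator measurableSet_Iic, hμI,
      Measure.restrict_restrict measurableSet_Iic]
    have : Iic s ∩ Ioc a x = Ioc a s := by
      ext t
      simp only [mem_inter_iff, mem_Iic, mem_Ioc]
      exact ⟨fun ⟨h1, h2, h3⟩ => ⟨h2, h1⟩, fun ⟨h1, h2⟩ => ⟨h2, h1, h2.trans hs.2⟩⟩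
    rw [this, intervalIntegral.integral_of_le hs.1.le, MeasureTheory.integral_const_mul]
  -- triangle part
  have step3 : ∫ q, A.indicator Φ q ∂(μI.prod μI)
      = ∫ t, (∫ s in a..t, g₁ s) * g₂ t ∂μI := by
    rw [MeasureTheory.integral_prod_symm _ (hΦ.indicator hA)]
    refine integral_congr_ae ?_
    filter_upwards [ae_restrict_mem measurableSet_Ioc] with t ht
    have hind : (fun s => A.indicator Φ (s, t)) = (Iio t).indicator (fun s => g₁ s * g₂ t) := by
      have hmem : ∀ s : ℝ, ((s, t) ∈ A ↔ s ∈ Iio t) := by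
        intro s; simp [hAdef]
      funext s
      by_cases h : s ∈ Iio t
      · rw [Set.indicator_of_mem ((hmem s).2 h), Set.indicator_of_mem h]
      · rw [Set.indicator_of_notMem (fun hc => h ((hmem s).1 hc)), Set.indicator_of_notMem h]
    rw [hind, MeasureTheory.integral_indicator measurableSet_Iio, hμI,
      Measure.restrict_restrict measurableSet_Iio]
    have : Iio t ∩ Ioc a x = Ioo a t := by
      ext s
      simp only [mem_inter_iff, mem_Iio, mem_Ioc, mem_Ioo]
      exact ⟨fun ⟨h1, h2, h3⟩ => ⟨h2, h1⟩, fun ⟨h1, h2⟩ => ⟨h2, h1, h2.le.trans ht.2⟩⟩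
    rw [this, ← MeasureTheory.integral_Ioc_eq_integral_Ioo,
      intervalIntegral.integral_of_le ht.1.le, MeasureTheory.integral_mul_const]
  -- combine
  have split : ∫ q, Φ q ∂(μI.prod μI)
      = (∫ q, A.indicator Φ q ∂(μI.prod μI)) + ∫ q, Aᶜ.indicator Φ q ∂(μI.prod μI) := by
    rw [← MeasureTheory.integral_add (hΦ.indicator hA) (hΦ.indicator hA.compl)]
    exact integral_congr_ae (Filter.Eventually.of_forall fun q =>
      (Set.indicator_self_add_compl_apply A Φ q).symm)
  -- integrability of the two pieces on Ioc a x
  have cont₁ : ContinuousOn (fun t => ∫ s in a..t, g₁ s) (Icc a x) := by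
    have := intervalIntegral.continuousOn_primitive_interval' (h₁.mono_set hsub) left_mem_uIcc
    rwa [uIcc_of_le hx.1] at this
  have cont₂ : ContinuousOn (fun t => ∫ s in a..t, g₂ s) (Icc a x) := by
    have := intervalIntegral.continuousOn_primitive_interval' (h₂.mono_set hsub) left_mem_uIcc
    rwa [uIcc_of_le hx.1] at this
  have int₁ : IntegrableOn (fun t => g₁ t * (∫ s in a..t, g₂ s)) (Ioc a x) volume := by
    refine IntegrableOn.mono_set ?_ Ioc_subset_Icc_self
    exact (((integrableOn_Icc_iff_integrableOn_Ioc enorm_ne_top).2 h₁x).mul_continuousOn cont₂ isCompact_Icc)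
  have int₂ : IntegrableOn (fun t => (∫ s in a..t, g₁ s) * g₂ t) (Ioc a x) volume := by
    refine IntegrableOn.mono_set ?_ Ioc_subset_Icc_self
    exact IntegrableOn.continuousOn_mul cont₁ ((integrableOn_Icc_iff_integrableOn_Ioc enorm_ne_top).2 h₂x) isCompact_Icc
  rw [← step1, split, step2, step3, intervalIntegral.integral_of_le hx.1,
    MeasureTheory.integral_add int₁ int₂]
  simp only [hμI]
  ring
theorem my_rep_mul {F₁ F₂ g₁ g₂ : ℝ → ℂ} {a b : ℝ} (hab : a ≤ b)
    (h₁ : IntervalIntegrable g₁ volume a b) (h₂ : IntervalIntegrable g₂ volume a b)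
    (hr₁ : ∀ x ∈ Icc a b, F₁ x = F₁ a + ∫ t in a..x, g₁ t)
    (hr₂ : ∀ x ∈ Icc a b, F₂ x = F₂ a + ∫ t in a..x, g₂ t) :
    IntervalIntegrable (fun t => g₁ t * F₂ t + F₁ t * g₂ t) volume a b ∧
    ∀ x ∈ Icc a b, F₁ x * F₂ x = F₁ a * F₂ a + ∫ t in a..x, (g₁ t * F₂ t + F₁ t * g₂ t) := by
  have primcont : ∀ (g : ℝ → ℂ), IntervalIntegrable g volume a b →
      ContinuousOn (fun x => ∫ t in a..x, g t) (Icc a b) := by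
    intro g hg
    have := intervalIntegral.continuousOn_primitive_interval' hg left_mem_uIcc
    rwa [uIcc_of_le hab] at this
  have contF₁ : ContinuousOn F₁ (Icc a b) :=
    (continuousOn_const.add (primcont g₁ h₁)).congr hr₁
  have contF₂ : ContinuousOn F₂ (Icc a b) :=
    (continuousOn_const.add (primcont g₂ h₂)).congr hr₂
  have i₁ : IntegrableOn (fun t => g₁ t * F₂ t) (Icc a b) volume :=
    ((integrableOn_Icc_iff_integrableOn_Ioc enorm_ne_top).2 h₁.1).mul_continuousOn contF₂ isCompact_Icc
  have i₂ : IntegrableOn (fun t => F₁ t * g₂ t) (Icc a b) volume :=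
    IntegrableOn.continuousOn_mul contF₁ ((integrableOn_Icc_iff_integrableOn_Ioc enorm_ne_top).2 h₂.1)
      isCompact_Icc
  have hint : IntervalIntegrable (fun t => g₁ t * F₂ t + F₁ t * g₂ t) volume a b := by
    rw [intervalIntegrable_iff_integrableOn_Ioc_of_le hab]
    have : IntegrableOn (fun t => g₁ t * F₂ t + F₁ t * g₂ t) (Icc a b) volume := i₁.add i₂
    exact this.mono_set Ioc_subset_Icc_self
  refine ⟨hint, fun x hx => ?_⟩
  have hsub : uIcc a x ⊆ uIcc a b := by
    rw [uIcc_of_le hab, uIcc_of_le hx.1]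
    exact Icc_subset_Icc_right hx.2
  have hxint₁ : IntervalIntegrable g₁ volume a x := h₁.mono_set hsub
  have hxint₂ : IntervalIntegrable g₂ volume a x := h₂.mono_set hsub
  have primcont₁ : ContinuousOn (fun t => ∫ s in a..t, g₁ s) (Icc a x) := by
    have := intervalIntegral.continuousOn_primitive_interval' hxint₁ left_mem_uIcc
    rwa [uIcc_of_le hx.1] at this
  have primcont₂ : ContinuousOn (fun t => ∫ s in a..t, g₂ s) (Icc a x) := by
    have := intervalIntegral.continuousOn_primitive_interval' hxint₂ left_mem_uIcc
    rwa [uIcc_of_le hx.1] at this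
  have p₁ : IntervalIntegrable (fun t => g₁ t * F₂ a + F₁ a * g₂ t) volume a x :=
    (hxint₁.mul_const _).add (hxint₂.const_mul _)
  have p₂ : IntervalIntegrable
      (fun t => g₁ t * (∫ s in a..t, g₂ s) + (∫ s in a..t, g₁ s) * g₂ t) volume a x := by
    rw [intervalIntegrable_iff_integrableOn_Ioc_of_le hx.1]
    refine IntegrableOn.mono_set ?_ Ioc_subset_Icc_self
    have q1 : IntegrableOn (fun t => g₁ t * (∫ s in a..t, g₂ s)) (Icc a x) volume :=
      ((integrableOn_Icc_iff_integrableOn_Ioc enorm_ne_top).2 hxint₁.1).mul_continuousOn primcont₂ isCompact_Icc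
    have q2 : IntegrableOn (fun t => (∫ s in a..t, g₁ s) * g₂ t) (Icc a x) volume :=
      IntegrableOn.continuousOn_mul primcont₁ ((integrableOn_Icc_iff_integrableOn_Ioc enorm_ne_top).2 hxint₂.1)
        isCompact_Icc
    exact q1.add q2
  have congr1 : (∫ t in a..x, (g₁ t * F₂ t + F₁ t * g₂ t))
      = ∫ t in a..x, ((g₁ t * F₂ a + F₁ a * g₂ t)
          + (g₁ t * (∫ s in a..t, g₂ s) + (∫ s in a..t, g₁ s) * g₂ t)) := by
    refine intervalIntegral.integral_congr fun t ht => ?_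
    rw [uIcc_of_le hx.1] at ht
    have htab : t ∈ Icc a b := ⟨ht.1, ht.2.trans hx.2⟩
    rw [hr₁ t htab, hr₂ t htab]
    ring
  rw [hr₁ x hx, hr₂ x hx, congr1, intervalIntegral.integral_add p₁ p₂,
    intervalIntegral.integral_add (hxint₁.mul_const _) (hxint₂.const_mul _),
    intervalIntegral.integral_mul_const, intervalIntegral.integral_const_mul,
    ← my_primitive_mul g₁ g₂ hab h₁ h₂ hx]
  ring

theorem my_gronwall_right {z cf : ℝ → ℂ} {a b : ℝ} (hab : a ≤ b)
    (hc : IntervalIntegrable cf volume a b)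
    (hcz : IntervalIntegrable (fun t => cf t * z t) volume a b)
    (hz : ContinuousOn z (Icc a b))
    (heq : ∀ y ∈ Icc a b, z y = ∫ t in a..y, cf t * z t) :
    ∀ y ∈ Icc a b, z y = 0 := by
  set A : Set ℝ := {y | y ∈ Icc a b ∧ ∀ t ∈ Icc a y, z t = 0} with hAdef
  have hsubII : ∀ {c d : ℝ}, c ∈ Icc a b → d ∈ Icc a b →
      ∀ {g : ℝ → ℂ}, IntervalIntegrable g volume a b → IntervalIntegrable g volume c d := by
    intro c d hcm hdm g hg
    refine hg.mono_set ?_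
    rw [uIcc_of_le hab]
    exact uIcc_subset_Icc hcm hdm
  have haA : a ∈ A := by
    refine ⟨left_mem_Icc.2 hab, fun t ht => ?_⟩
    rw [show t = a from le_antisymm ht.2 ht.1, heq a (left_mem_Icc.2 hab),
      intervalIntegral.integral_same]
  have hbdd : BddAbove A := ⟨b, fun y hy => hy.1.2⟩
  have hAne : A.Nonempty := ⟨a, haA⟩
  set m := sSup A with hm
  have ham : a ≤ m := le_csSup hbdd haA
  have hmb : m ≤ b := csSup_le hAne fun y hy => hy.1.2
  have hmm : m ∈ Icc a b := ⟨ham, hmb⟩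
  have hzlt : ∀ t, a ≤ t → t < m → z t = 0 := by
    intro t hat htm
    obtain ⟨y, hyA, hty⟩ := exists_lt_of_lt_csSup hAne htm
    exact hyA.2 t ⟨hat, hty.le⟩
  have hne : ∀ᵐ (t : ℝ) ∂(volume : Measure ℝ), t ≠ m := by
    rw [ae_iff]
    simp only [not_not, setOf_eq_eq_singleton]
    exact measure_singleton m
  have hzm : z m = 0 := by
    rw [heq m hmm, intervalIntegral.integral_of_le ham]
    have h0 : ∀ᵐ t ∂(volume : Measure ℝ), t ∈ Ioc a m → cf t * z t = 0 := by
      filter_upwards [hne] with t htm hmem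
      rw [hzlt t hmem.1.le (lt_of_le_of_ne hmem.2 htm), mul_zero]
    rw [show (∫ t in Ioc a m, cf t * z t) = ∫ _ in Ioc a m, (0:ℂ) from
      setIntegral_congr_ae measurableSet_Ioc h0, integral_zero]
  have hmA : ∀ t ∈ Icc a m, z t = 0 := by
    intro t ht
    rcases lt_or_eq_of_le ht.2 with h | h
    · exact hzlt t ht.1 h
    · rw [h]; exact hzm
  rcases eq_or_lt_of_le hmb with hmb' | hmb'
  · intro y hy
    exact hmA y ⟨hy.1, hy.2.trans_eq hmb'.symm⟩
  · exfalso
    have hcm : IntervalIntegrable (fun t => ‖cf t‖) volume m b :=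
      (hsubII hmm (right_mem_Icc.2 hab) hc).norm
    have hTcont : ContinuousOn (fun y => ∫ t in m..y, ‖cf t‖) (Icc m b) := by
      have := intervalIntegral.continuousOn_primitive_interval' hcm left_mem_uIcc
      rwa [uIcc_of_le hmb] at this
    have hmem_cl : m ∈ closure (Ioc m b) := by
      rw [closure_Ioc hmb'.ne]
      exact left_mem_Icc.2 hmb
    have hnebot : (𝓝[Ioc m b] m).NeBot := mem_closure_iff_nhdsWithin_neBot.1 hmem_cl
    have hcw : Tendsto (fun y => ∫ t in m..y, ‖cf t‖) (𝓝[Ioc m b] m) (𝓝 0) := by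
      have h1 := (hTcont m (left_mem_Icc.2 hmb)).mono Ioc_subset_Icc_self
      rw [ContinuousWithinAt, intervalIntegral.integral_same] at h1
      exact h1
    have hev : ∀ᶠ y in 𝓝[Ioc m b] m, (∫ t in m..y, ‖cf t‖) < 1/2 :=
      hcw.eventually_lt_const (by norm_num)
    obtain ⟨d, hd1, hd2⟩ := (hev.and eventually_mem_nhdsWithin).exists
    have hmd : m ≤ d := hd2.1.le
    have hdb : d ∈ Icc a b := ⟨ham.trans hmd, hd2.2⟩
    have hzc : ContinuousOn (fun t => ‖z t‖) (Icc m d) :=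
      (hz.mono (Icc_subset_Icc ham hd2.2)).norm
    obtain ⟨w, hwmem, hwmax⟩ := isCompact_Icc.exists_isMaxOn (nonempty_Icc.2 hmd) hzc
    set S := ‖z w‖ with hS
    have hSnn : 0 ≤ S := norm_nonneg _
    have hzsub : ∀ y ∈ Icc m d, z y = ∫ t in m..y, cf t * z t := by
      intro y hy
      have hymem : y ∈ Icc a b := ⟨ham.trans hy.1, hy.2.trans hd2.2⟩
      have hsplit := intervalIntegral.integral_add_adjacent_intervals
        (hsubII (left_mem_Icc.2 hab) hmm hcz) (hsubII hmm hymem hcz)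
      have h1 : (∫ t in a..m, cf t * z t) = 0 := by rw [← heq m hmm]; exact hzm
      rw [heq y hymem, ← hsplit, h1, zero_add]
    have hbound : ∀ y ∈ Icc m d, ‖z y‖ ≤ S * (1/2) := by
      intro y hy
      have hymem : y ∈ Icc a b := ⟨ham.trans hy.1, hy.2.trans hd2.2⟩
      rw [hzsub y hy]
      have hIy : IntervalIntegrable (fun t => ‖cf t * z t‖) volume m y :=
        (hsubII hmm hymem hcz).norm
      have hIcS : IntervalIntegrable (fun t => ‖cf t‖ * S) volume m y :=
        (hsubII hmm hymem hc).norm.mul_const _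
      have h1 : ‖∫ t in m..y, cf t * z t‖ ≤ ∫ t in m..y, ‖cf t‖ * S := by
        refine (intervalIntegral.norm_integral_le_integral_norm hy.1).trans ?_
        refine intervalIntegral.integral_mono_on hy.1 hIy hIcS fun t ht => ?_
        rw [norm_mul]
        exact mul_le_mul_of_nonneg_left (hwmax ⟨ht.1, ht.2.trans hy.2⟩) (norm_nonneg _)
      have h2 : (∫ t in m..y, ‖cf t‖ * S) = (∫ t in m..y, ‖cf t‖) * S :=
        intervalIntegral.integral_mul_const _ _
      have h3 : (∫ t in m..y, ‖cf t‖) ≤ ∫ t in m..d, ‖cf t‖ := by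
        rw [intervalIntegral.integral_of_le hy.1, intervalIntegral.integral_of_le hmd]
        refine setIntegral_mono_set ((hsubII hmm hdb hc).norm.1) ?_ ?_
        · exact Eventually.of_forall fun t => norm_nonneg _
        · exact Eventually.of_forall (Ioc_subset_Ioc_right hy.2)
      calc ‖∫ t in m..y, cf t * z t‖ ≤ (∫ t in m..y, ‖cf t‖) * S := by rw [← h2]; exact h1
        _ ≤ (1/2) * S := by
            refine mul_le_mul_of_nonneg_right ?_ hSnn
            exact h3.trans hd1.le
        _ = S * (1/2) := by ring
    have hfin : S ≤ S * (1/2) := hbound w hwmem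
    have hS0 : S ≤ 0 := by linarith
    have hzmd : ∀ t ∈ Icc m d, z t = 0 := fun t ht =>
      norm_le_zero_iff.1 ((hwmax ht).trans hS0)
    have hdA : d ∈ A := by
      refine ⟨hdb, fun t ht => ?_⟩
      rcases le_or_gt t m with h | h
      · exact hmA t ⟨ht.1, h⟩
      · exact hzmd t ⟨h.le, ht.2⟩
    exact absurd (le_csSup hbdd hdA) (not_le.2 hd2.1)
theorem my_gronwall {z cf : ℝ → ℂ} {a b x₀ : ℝ} (hx₀ : x₀ ∈ Icc a b)
    (hc : IntervalIntegrable cf volume a b)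
    (hcz : IntervalIntegrable (fun t => cf t * z t) volume a b)
    (hz : ContinuousOn z (Icc a b))
    (heq : ∀ y ∈ Icc a b, z y = ∫ t in x₀..y, cf t * z t) :
    ∀ y ∈ Icc a b, z y = 0 := by
  have hab : a ≤ b := hx₀.1.trans hx₀.2
  have hsubII : ∀ {c d : ℝ}, c ∈ Icc a b → d ∈ Icc a b →
      ∀ {g : ℝ → ℂ}, IntervalIntegrable g volume a b → IntervalIntegrable g volume c d := by
    intro c d hcm hdm g hg
    refine hg.mono_set ?_
    rw [uIcc_of_le hab]
    exact uIcc_subset_Icc hcm hdm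
  have hright : ∀ y ∈ Icc x₀ b, z y = 0 := by
    refine my_gronwall_right hx₀.2 (hsubII hx₀ (right_mem_Icc.2 hab) hc)
      (hsubII hx₀ (right_mem_Icc.2 hab) hcz)
      (hz.mono (Icc_subset_Icc hx₀.1 le_rfl)) fun y hy => ?_
    exact heq y ⟨hx₀.1.trans hy.1, hy.2⟩
  have hleft : ∀ y ∈ Icc a x₀, z y = 0 := by
    have hmemmap : ∀ y ∈ Icc (-x₀) (-a), -y ∈ Icc a b := by
      intro y hy
      constructor
      · linarith [hy.2]
      · linarith [hy.1, hx₀.2]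
    have hcax : IntervalIntegrable cf volume a x₀ := hsubII (left_mem_Icc.2 hab) hx₀ hc
    have hczax : IntervalIntegrable (fun t => cf t * z t) volume a x₀ :=
      hsubII (left_mem_Icc.2 hab) hx₀ hcz
    have key : ∀ y ∈ Icc (-x₀) (-a), z (-y) = 0 := by
      refine my_gronwall_right (z := fun t => z (-t)) (cf := fun t => -cf (-t))
        (a := -x₀) (b := -a) (neg_le_neg hx₀.1) ?_ ?_ ?_ ?_
      · have := ((IntervalIntegrable.iff_comp_neg enorm_ne_top).mp hcax).symm.neg
        exact this
      · have := ((IntervalIntegrable.iff_comp_neg enorm_ne_top).mp hczax).symm.neg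
        have h2 : (fun t => -cf (-t) * z (-t)) = fun t => -(cf (-t) * z (-t)) := by
          funext t; ring
        rw [h2]
        exact this
      · refine hz.comp continuous_neg.continuousOn fun y hy => hmemmap y hy
      · intro y hy
        have h1 : z (-y) = ∫ t in x₀..(-y), cf t * z t := heq (-y) (hmemmap y hy)
        have h2 : (∫ t in y..(-x₀), (fun s => cf s * z s) (-t)) = ∫ s in x₀..(-y), cf s * z s := by
          simpa using intervalIntegral.integral_comp_neg (fun s => cf s * z s) (a := y) (b := -x₀)
        show z (-y) = ∫ t in (-x₀)..y, -cf (-t) * z (-t)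
        rw [h1, ← h2, intervalIntegral.integral_symm, ← intervalIntegral.integral_neg]
        refine intervalIntegral.integral_congr fun t ht => ?_
        simp [neg_mul]
    intro y hy
    have : -y ∈ Icc (-x₀) (-a) := ⟨neg_le_neg hy.2, neg_le_neg hy.1⟩
    simpa using key (-y) this
  intro y hy
  rcases le_total y x₀ with h | h
  · exact hleft y ⟨hy.1, h⟩
  · exact hright y ⟨h, hy.2⟩

/-- every admissible solution `u` of `ℓ_ε[u] = 0` (a.e.) on `(0,π)` has the
form `u = α ψ + β` with `ψ = f/p`. -/
theorem stmt3 (ε c δ : ℝ) (f p : ℝ → ℝ)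
    (hf : StandingHyp ε c δ f) (hp : IsIntegratingFactor ε f p)
    (u u' : ℝ → ℂ) (hu : AdmissibleOn f u u' (Ioo 0 π))
    (heq : EllEq ε f u u' (fun _ => 0) (Ioo 0 π)) :
    ∃ α β : ℂ, ∀ x ∈ Ioo 0 π, u x = α * psiC f p x + β := by
  obtain ⟨w', hw'deriv, hw'eq⟩ := heq
  have hπ := Real.pi_pos
  set x₀ : ℝ := π / 2 with hx₀def
  have hx₀ : x₀ ∈ Ioo 0 π := ⟨by positivity, by rw [hx₀def]; linarith⟩
  set εC : ℂ := (ε : ℂ) with hεCdef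
  have hεC : εC ≠ 0 := by
    rw [hεCdef]
    exact Complex.ofReal_ne_zero.2 hf.εpos.ne'
  set K : ℂ := εC * ((f x₀ : ℂ) * u' x₀) + u x₀ with hKdef
  set α : ℂ := (u x₀ - K) * (p x₀ : ℂ) / (f x₀ : ℂ) with hαdef
  refine ⟨α, K, fun x hx => ?_⟩
  set a : ℝ := min x x₀ / 2 with hadef
  set b : ℝ := (max x x₀ + π) / 2 with hbdef
  have hmin : 0 < min x x₀ := lt_min hx.1 hx₀.1
  have hmax : max x x₀ < π := max_lt hx.2 hx₀.2
  have ha_lt : a < min x x₀ := by rw [hadef]; linarith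
  have hb_gt : max x x₀ < b := by rw [hbdef]; linarith
  have ha_pos : 0 < a := by rw [hadef]; linarith
  have hb_lt : b < π := by rw [hbdef]; linarith
  have hab : a < b := lt_of_lt_of_le (ha_lt.trans_le (min_le_max)) hb_gt.le
  have hxI : x ∈ Icc a b := ⟨(ha_lt.trans_le (min_le_left _ _)).le,
    ((le_max_left _ _).trans_lt hb_gt).le⟩
  have hx₀I : x₀ ∈ Icc a b := ⟨(ha_lt.trans_le (min_le_right _ _)).le,
    ((le_max_right _ _).trans_lt hb_gt).le⟩
  have hIcc : Icc a b ⊆ Ioo 0 π := fun t ht => ⟨ha_pos.trans_le ht.1, ht.2.trans_lt hb_lt⟩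
  have hIccpm : Icc a b ⊆ Ipm := fun t ht => Or.inr (hIcc ht)
  have hIoosub : Ioo a b ⊆ Ioo 0 π := fun t ht => hIcc (Ioo_subset_Icc_self ht)
  have hfpos : ∀ t ∈ Icc a b, 0 < f t := fun t ht => hf.pos t (hIcc ht)
  have hsubuIcc : ∀ {y : ℝ}, y ∈ Icc a b → uIcc a y ⊆ uIcc a b := by
    intro y hy
    rw [uIcc_of_le hab.le, uIcc_of_le hy.1]
    exact Icc_subset_Icc_right hy.2
  -- representations
  obtain ⟨gu, hguI, hgu⟩ := hu.ac a b hab hIcc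
  obtain ⟨gw, hgwI, hgw⟩ := hu.acf a b hab hIcc
  obtain ⟨gp, hgpI, hgp⟩ := hp.ac a b hab hIccpm
  obtain ⟨gf, hgfI, hgf⟩ := hf.ac a b hab (subset_univ _)
  -- STEP 1 : the function G = ε f u' + u is constant equal to K on [a,b]
  set W : ℝ → ℂ := fun y => (f y : ℂ) * u' y + u y with hWdef
  set G : ℝ → ℂ := fun y => εC * W y + (1 - εC) * u y with hGdef
  set gG : ℝ → ℂ := fun t => εC * gw t + (1 - εC) * gu t with hgGdef
  have hgGI : IntervalIntegrable gG volume a b :=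
    (hgwI.const_mul εC).add (hguI.const_mul (1 - εC))
  have hGrep : ∀ y ∈ Icc a b, G y = G a + ∫ t in a..y, gG t := by
    intro y hy
    simp only [hgGdef, hGdef]
    rw [intervalIntegral.integral_add ((hgwI.mono_set (hsubuIcc hy)).const_mul εC)
        ((hguI.mono_set (hsubuIcc hy)).const_mul (1 - εC)),
      intervalIntegral.integral_const_mul, intervalIntegral.integral_const_mul,
      hgw y hy, hgu y hy]
    ring
  have hGder : ∀ᵐ t ∂(volume : Measure ℝ), t ∈ Ioo a b → HasDerivAt G 0 t := by
    filter_upwards [hu.hu', hw'deriv, hw'eq] with t h1 h2 h3 ht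
    have hts : t ∈ Ioo 0 π := hIoosub ht
    have d1 : HasDerivAt u (u' t) t := h1 hts
    have dW : HasDerivAt W (w' t + u' t) t := (h2 hts).add d1
    have dG : HasDerivAt G (εC * (w' t + u' t) + (1 - εC) * u' t) t :=
      (dW.const_mul εC).add (d1.const_mul (1 - εC))
    have h0 : εC * (w' t + u' t) + (1 - εC) * u' t = 0 := by
      have h4 := h3 hts
      simp only [hεCdef] at h4 ⊢
      linear_combination h4
    rwa [h0] at dG
  have hgG0 : ∀ᵐ t ∂(volume : Measure ℝ), t ∈ Ioo a b → (fun _ => (0:ℂ)) t = gG t :=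
    my_ae_eq_deriv_of_rep hab hgGI hGrep hGder
  have hGconst : ∀ y ∈ Icc a b, G y = G a := by
    intro y hy
    rw [hGrep y hy]
    have h0 : ∀ᵐ t ∂(volume : Measure ℝ), t ∈ Ioc a y → gG t = 0 := by
      filter_upwards [hgG0, my_ae_ne b] with t h1 h2 htm
      have htm' : t ∈ Ioo a b := ⟨htm.1, lt_of_le_of_ne (htm.2.trans hy.2) h2⟩
      exact (h1 htm').symm
    rw [intervalIntegral.integral_of_le hy.1,
      show (∫ t in Ioc a y, gG t) = ∫ _ in Ioc a y, (0:ℂ) from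
        setIntegral_congr_ae measurableSet_Ioc h0, integral_zero, add_zero]
  have hGK : ∀ y ∈ Icc a b, G y = K := by
    intro y hy
    rw [hGconst y hy, ← hGconst x₀ hx₀I]
    simp only [hGdef, hWdef, hKdef]
    ring
  have hfu' : ∀ y ∈ Icc a b, εC * ((f y : ℂ) * u' y) = K - u y := by
    intro y hy
    have h := hGK y hy
    simp only [hGdef, hWdef] at h
    linear_combination h
  -- casts
  set pC : ℝ → ℂ := fun y => ((p y : ℝ) : ℂ) with hpCdef
  set fC : ℝ → ℂ := fun y => ((f y : ℝ) : ℂ) with hfCdef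
  set gpC : ℝ → ℂ := fun t => ((gp t : ℝ) : ℂ) with hgpCdef
  set gfC : ℝ → ℂ := fun t => ((gf t : ℝ) : ℂ) with hgfCdef
  have hgpCI : IntervalIntegrable gpC volume a b := ⟨hgpI.1.ofReal, hgpI.2.ofReal⟩
  have hgfCI : IntervalIntegrable gfC volume a b := ⟨hgfI.1.ofReal, hgfI.2.ofReal⟩
  have hpCrep : ∀ y ∈ Icc a b, pC y = pC a + ∫ t in a..y, gpC t := by
    intro y hy
    simp only [hpCdef, hgpCdef]
    rw [hgp y hy, Complex.ofReal_add, ← intervalIntegral.integral_ofReal]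
  have hfCrep : ∀ y ∈ Icc a b, fC y = fC a + ∫ t in a..y, gfC t := by
    intro y hy
    simp only [hfCdef, hgfCdef]
    rw [hgf y hy, Complex.ofReal_add, ← intervalIntegral.integral_ofReal]
  -- STEP 2 : define V and show V ≡ 0 by Gronwall
  set F₁ : ℝ → ℂ := fun y => u y - K with hF₁def
  have hF₁rep : ∀ y ∈ Icc a b, F₁ y = F₁ a + ∫ t in a..y, gu t := by
    intro y hy
    simp only [hF₁def]
    rw [hgu y hy]
    ring
  obtain ⟨hprodI, hprod⟩ := my_rep_mul hab.le hguI hgpCI hF₁rep hpCrep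
  set gV : ℝ → ℂ := fun t => (gu t * pC t + F₁ t * gpC t) - α * gfC t with hgVdef
  set V : ℝ → ℂ := fun y => F₁ y * pC y - α * fC y with hVdef
  have hgVI : IntervalIntegrable gV volume a b := hprodI.sub (hgfCI.const_mul α)
  have hVrep : ∀ y ∈ Icc a b, V y = V a + ∫ t in a..y, gV t := by
    intro y hy
    simp only [hVdef, hgVdef]
    rw [intervalIntegral.integral_sub (hprodI.mono_set (hsubuIcc hy))
        ((hgfCI.mono_set (hsubuIcc hy)).const_mul α),
      intervalIntegral.integral_const_mul, hprod y hy, hfCrep y hy]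
    ring
  have hVx₀rep : ∀ y ∈ Icc a b, V y = V x₀ + ∫ t in x₀..y, gV t := by
    intro y hy
    rw [hVrep y hy, hVrep x₀ hx₀I]
    have hs := intervalIntegral.integral_interval_sub_left
      (hgVI.mono_set (hsubuIcc hy)) (hgVI.mono_set (hsubuIcc hx₀I))
    linear_combination hs
  have hfx₀ : (f x₀ : ℂ) ≠ 0 := Complex.ofReal_ne_zero.2 (hf.pos x₀ hx₀).ne'
  have hVx₀ : V x₀ = 0 := by
    simp only [hVdef, hF₁def, hpCdef, hfCdef, hαdef]
    field_simp
    ring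
  -- a.e. identities
  have hguEq : ∀ᵐ t ∂(volume : Measure ℝ), t ∈ Ioo a b → u' t = gu t := by
    refine my_ae_eq_deriv_of_rep hab hguI hgu ?_
    filter_upwards [hu.hu'] with t h1 ht
    exact h1 (hIoosub ht)
  have hgfEq : ∀ᵐ t ∂(volume : Measure ℝ), t ∈ Ioo a b → deriv f t = gf t := by
    obtain ⟨S, hS1, _⟩ := hf.diff
    refine my_ae_eq_deriv_of_rep hab hgfI hgf ?_
    have hSae : ∀ᵐ (t : ℝ) ∂(volume : Measure ℝ), t ∉ (S : Set ℝ) :=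
      (S.finite_toSet.countable).ae_notMem volume
    filter_upwards [hSae] with t ht _
    exact (hS1 t ht).hasDerivAt
  have hgpEq : ∀ᵐ t ∂(volume : Measure ℝ), t ∈ Ioo a b →
      p t * (deriv f t / f t + 1 / (ε * f t)) = gp t := by
    refine my_ae_eq_deriv_of_rep hab hgpI hgp ?_
    filter_upwards [hp.ode] with t h1 ht
    exact h1 (Or.inr (hIoosub ht))
  -- the coefficient
  have hfcont : ContinuousOn f (Icc a b) := my_cont_of_rep hab.le hgfI hgf
  set cV : ℝ → ℂ := fun t => ((gf t / f t : ℝ) : ℂ) with hcVdef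
  have hcVIcc : IntegrableOn cV (Icc a b) volume := by
    have h1 : IntegrableOn (fun t => gf t * (f t)⁻¹) (Icc a b) volume :=
      ((integrableOn_Icc_iff_integrableOn_Ioc enorm_ne_top).2 hgfI.1).mul_continuousOn
        (hfcont.inv₀ fun t ht => (hfpos t ht).ne') isCompact_Icc
    have h2 : (fun t => gf t / f t) = fun t => gf t * (f t)⁻¹ := by
      funext t
      rw [div_eq_mul_inv]
    rw [hcVdef, show (fun t => ((gf t / f t : ℝ) : ℂ)) = fun t => (((fun s => gf s / f s) t : ℝ) : ℂ) from rfl]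
    rw [h2]
    exact h1.ofReal
  have hcVI : IntervalIntegrable cV volume a b := by
    rw [intervalIntegrable_iff_integrableOn_Ioc_of_le hab.le]
    exact hcVIcc.mono_set Ioc_subset_Icc_self
  have hVcont : ContinuousOn V (Icc a b) := my_cont_of_rep hab.le hgVI hVrep
  have hcVVI : IntervalIntegrable (fun t => cV t * V t) volume a b := by
    rw [intervalIntegrable_iff_integrableOn_Ioc_of_le hab.le]
    exact (hcVIcc.mul_continuousOn hVcont isCompact_Icc).mono_set Ioc_subset_Icc_self
  -- the integrand identity
  have hgVcV : ∀ᵐ t ∂(volume : Measure ℝ), t ∈ Ioo a b → gV t = cV t * V t := by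
    filter_upwards [hguEq, hgfEq, hgpEq] with t h1 h2 h3 ht
    have htI : t ∈ Icc a b := Ioo_subset_Icc_self ht
    have hft : (f t : ℂ) ≠ 0 := Complex.ofReal_ne_zero.2 (hfpos t htI).ne'
    have hftR : f t ≠ 0 := (hfpos t htI).ne'
    have hu't : u' t = (K - u t) / (εC * (f t : ℂ)) := by
      rw [eq_div_iff (mul_ne_zero hεC hft)]
      linear_combination hfu' t htI
    simp only [hgVdef, hcVdef, hVdef, hF₁def, hpCdef, hfCdef, hgpCdef, hgfCdef]
    rw [← h1 ht, ← h2 ht, ← h3 ht, hu't]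
    push_cast
    have hεR : (ε : ℂ) ≠ 0 := hεC
    simp only [hεCdef]
    field_simp
    ring
  -- Gronwall
  have hVgron : ∀ y ∈ Icc a b, V y = ∫ t in x₀..y, cV t * V t := by
    intro y hy
    rw [hVx₀rep y hy, hVx₀, zero_add]
    refine intervalIntegral.integral_congr_ae ?_
    filter_upwards [hgVcV, my_ae_ne b] with t h1 h2 htm
    have hax₀ : a < x₀ := ha_lt.trans_le (min_le_right _ _)
    have htm' : t ∈ Ioo a b := by
      rcases Set.mem_uIoc.1 htm with h | h
      · exact ⟨hax₀.trans h.1, lt_of_le_of_ne (h.2.trans hy.2) h2⟩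
      · exact ⟨lt_of_le_of_lt hy.1 h.1, lt_of_le_of_ne (h.2.trans hx₀I.2) h2⟩
    exact h1 htm'
  have hVzero : ∀ y ∈ Icc a b, V y = 0 := my_gronwall hx₀I hcVI hcVVI hVcont hVgron
  -- conclusion
  have hVx : V x = 0 := hVzero x hxI
  have hpx : (p x : ℂ) ≠ 0 := Complex.ofReal_ne_zero.2 (hp.ne x (Or.inr hx))
  have hfx : (f x : ℂ) ≠ 0 := Complex.ofReal_ne_zero.2 (hf.pos x hx).ne'
  simp only [hVdef, hF₁def, hpCdef, hfCdef] at hVx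
  rw [psiC]
  push_cast
  rw [sub_eq_zero] at hVx
  field_simp at hVx ⊢
  linear_combination hVx
end
end

section
/- Let M : Dom(M) → H be a closed operator on an infinite-dimensional Hilbert space H with compact resolvent, with eigenvalues μ_n ∈ ℂ and corresponding eigenvectors φ_n ≠ 0, Mφ_n = μ_n φ_n. Suppose {φ_n}_{n=1}^∞ is a conditional (Schauder) basis of H with biorthogonal system {φ_n*} (⟨φ_n, φ_m*⟩ = δ_{nm}, and ‖g - Σ_{n=1}^k ⟨g, φ_n*⟩ φ_n‖ → 0 as k → ∞ for every g ∈ H). Then Dom(M) = { g ∈ H : the partial sums Σ_{n=1}^k μ_n ⟨g, φ_n*⟩ φ_n converge in H as k → ∞ }, and for every g ∈ Dom(M), Mg = lim_{k→∞} Σ_{n=1}^k μ_n ⟨g, φ_n*⟩ φ_n. -/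
open Filter Topology

/-- Lemma `diagonalisation`: let `M` be a closed operator with compact
resolvent on an infinite-dimensional Hilbert space `H` whose eigenvectors `φ_n`
(eigenvalues `μ_n`) form a conditional (Schauder) basis with biorthogonal system
`φ_n*`. Then `Dom(M)` consists exactly of those `g` for which
`Σ μ_n ⟨g,φ_n*⟩ φ_n` converges, and `M g` is its sum. -/
theorem stmt17 {H : Type*} [NormedAddCommGroup H] [InnerProductSpace ℂ H]
    [CompleteSpace H] (hinf : ¬ FiniteDimensional ℂ H)
    (D : Submodule ℂ H) (M : D →ₗ[ℂ] H)
    (hclosed : ∀ (g : ℕ → D) (x y : H),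
      Tendsto (fun n => (g n : H)) atTop (𝓝 x) →
      Tendsto (fun n => M (g n)) atTop (𝓝 y) →
      ∃ hx : x ∈ D, M ⟨x, hx⟩ = y)
    (hres : ∃ (μ : ℂ) (R : H →L[ℂ] H), IsCompactOperator R ∧
      (∀ y : H, ∃ h : R y ∈ D, M ⟨R y, h⟩ - μ • R y = y) ∧
      ∀ x : D, R (M x - μ • (x : H)) = (x : H))
    (μs : ℕ → ℂ) (φ : ℕ → H) (φs : ℕ → H)
    (hφD : ∀ n, φ n ∈ D) (hφ0 : ∀ n, φ n ≠ 0)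
    (heig : ∀ n, M ⟨φ n, hφD n⟩ = μs n • φ n)
    (hbi : ∀ n m, (inner ℂ (φs n) (φ m) : ℂ) = if n = m then 1 else 0)
    (hbasis : ∀ g : H,
      Tendsto (fun k => ∑ n ∈ Finset.range k, (inner ℂ (φs n) g : ℂ) • φ n) atTop (𝓝 g)) :
    ∀ g : H,
      (g ∈ D ↔ ∃ h : H, Tendsto
        (fun k => ∑ n ∈ Finset.range k, (μs n * (inner ℂ (φs n) g : ℂ)) • φ n)
        atTop (𝓝 h)) ∧
      ∀ hg : g ∈ D, Tendsto
        (fun k => ∑ n ∈ Finset.range k, (μs n * (inner ℂ (φs n) g : ℂ)) • φ n)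
        atTop (𝓝 (M ⟨g, hg⟩)) := by
  obtain ⟨μ, R, -, hR1, hR2⟩ := hres
  -- R maps φ n to (μs n - μ)⁻¹ • φ n, and μs n ≠ μ
  have hRφ0 : ∀ n, (μs n - μ) • R (φ n) = φ n := by
    intro n
    have := hR2 ⟨φ n, hφD n⟩
    rw [heig n] at this
    calc (μs n - μ) • R (φ n) = R ((μs n - μ) • φ n) := (R.map_smul _ _).symm
    _ = R (μs n • φ n - μ • φ n) := by rw [sub_smul]
    _ = φ n := this
  have hμ : ∀ n, μs n - μ ≠ 0 := by
    intro n hn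
    apply hφ0 n
    rw [← hRφ0 n, hn, zero_smul]
  have hRφ : ∀ n, R (φ n) = (μs n - μ)⁻¹ • φ n := by
    intro n
    calc R (φ n) = (μs n - μ)⁻¹ • ((μs n - μ) • R (φ n)) := by
          rw [smul_smul, inv_mul_cancel₀ (hμ n), one_smul]
      _ = (μs n - μ)⁻¹ • φ n := by rw [hRφ0 n]
  -- key identity: (μs n - μ) * ⟨φs n, R h⟩ = ⟨φs n, h⟩ for all h
  have key : ∀ (n : ℕ) (h : H),
      (μs n - μ) * (inner ℂ (φs n) (R h) : ℂ) = inner ℂ (φs n) h := by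
    intro n h
    have cont : Continuous fun x : H => (μs n - μ) * (inner ℂ (φs n) (R x) : ℂ) := by
      exact continuous_const.mul ((innerSL ℂ (φs n)).continuous.comp R.continuous)
    have t1 : Tendsto (fun k =>
        (μs n - μ) * (inner ℂ (φs n)
          (R (∑ m ∈ Finset.range k, (inner ℂ (φs m) h : ℂ) • φ m)) : ℂ))
        atTop (𝓝 ((μs n - μ) * (inner ℂ (φs n) (R h) : ℂ))) :=
      (cont.tendsto h).comp (hbasis h)
    have t2 : Tendsto (fun k =>
        (μs n - μ) * (inner ℂ (φs n)
          (R (∑ m ∈ Finset.range k, (inner ℂ (φs m) h : ℂ) • φ m)) : ℂ))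
        atTop (𝓝 (inner ℂ (φs n) h : ℂ)) := by
      apply tendsto_const_nhds.congr'
      filter_upwards [eventually_ge_atTop (n + 1)] with k hk
      have hnk : n ∈ Finset.range k := Finset.mem_range.mpr hk
      rw [map_sum]
      have : ∀ m ∈ Finset.range k,
          R ((inner ℂ (φs m) h : ℂ) • φ m)
            = ((inner ℂ (φs m) h : ℂ) * (μs m - μ)⁻¹) • φ m := by
        intro m _
        rw [R.map_smul, hRφ m, smul_smul]
      rw [Finset.sum_congr rfl this, inner_sum]
      have : ∀ m ∈ Finset.range k,
          (inner ℂ (φs n) (((inner ℂ (φs m) h : ℂ) * (μs m - μ)⁻¹) • φ m) : ℂ)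
            = if n = m then (inner ℂ (φs n) h : ℂ) * (μs n - μ)⁻¹ else 0 := by
        intro m _
        rw [inner_smul_right, hbi n m]
        split
        · next h' => subst h'; ring
        · ring
      rw [Finset.sum_congr rfl this, Finset.sum_ite_eq (Finset.range k) n,
        if_pos hnk, mul_comm (inner ℂ (φs n) h : ℂ) ((μs n - μ)⁻¹), ← mul_assoc,
        mul_inv_cancel₀ (hμ n), one_mul]
    exact tendsto_nhds_unique t1 t2
  -- coefficient identity on the domain
  have hcoef : ∀ (g : H) (hg : g ∈ D) (n : ℕ),
      μs n * (inner ℂ (φs n) g : ℂ) = inner ℂ (φs n) (M ⟨g, hg⟩) := by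
    intro g hg n
    have hg' : R (M ⟨g, hg⟩ - μ • g) = g := hR2 ⟨g, hg⟩
    have := key n (M ⟨g, hg⟩ - μ • g)
    rw [hg', inner_sub_right, inner_smul_right] at this
    have h2 : (μs n - μ) * (inner ℂ (φs n) g : ℂ) + μ * (inner ℂ (φs n) g : ℂ)
        = inner ℂ (φs n) (M ⟨g, hg⟩) := by rw [this]; ring
    calc μs n * (inner ℂ (φs n) g : ℂ)
        = (μs n - μ) * (inner ℂ (φs n) g : ℂ) + μ * (inner ℂ (φs n) g : ℂ) := by ring
      _ = _ := h2
  intro g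
  have main : ∀ hg : g ∈ D, Tendsto
      (fun k => ∑ n ∈ Finset.range k, (μs n * (inner ℂ (φs n) g : ℂ)) • φ n)
      atTop (𝓝 (M ⟨g, hg⟩)) := by
    intro hg
    have : (fun k => ∑ n ∈ Finset.range k, (μs n * (inner ℂ (φs n) g : ℂ)) • φ n)
        = fun k => ∑ n ∈ Finset.range k, (inner ℂ (φs n) (M ⟨g, hg⟩) : ℂ) • φ n := by
      funext k
      exact Finset.sum_congr rfl fun n _ => by rw [hcoef g hg n]
    rw [this]
    exact hbasis (M ⟨g, hg⟩)
  refine ⟨⟨fun hg => ⟨M ⟨g, hg⟩, main hg⟩, ?_⟩, main⟩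
  rintro ⟨h, hh⟩
  set s : ℕ → D := fun k =>
    ∑ n ∈ Finset.range k, (inner ℂ (φs n) g : ℂ) • (⟨φ n, hφD n⟩ : D) with hs
  have hs1 : ∀ k, ((s k : D) : H)
      = ∑ n ∈ Finset.range k, (inner ℂ (φs n) g : ℂ) • φ n := by
    intro k
    simp [hs]
  have hs2 : ∀ k, M (s k)
      = ∑ n ∈ Finset.range k, (μs n * (inner ℂ (φs n) g : ℂ)) • φ n := by
    intro k
    rw [hs, map_sum]
    refine Finset.sum_congr rfl fun n _ => ?_
    rw [map_smul, heig n, smul_smul, mul_comm]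
  obtain ⟨hx, -⟩ := hclosed s g h
    (by simpa only [hs1] using hbasis g)
    (by simpa only [hs2] using hh)
  exact hx
end
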